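/- For every sequence t⃗ = (t_i) of nonnegative reals, the equivalence relation E_{t⃗} on 2^ω defined by x E_{t⃗} y iff sup_i t_i·|x(i)−y(i)| < ∞ is either smooth, Borel bireducible with E_0, or Borel bireducible with E_1. -/

import Mathlib

/-- The relation `E_t⃗` on `2^ω`: `x E_t⃗ y` iff `sup_i t_i·|x(i)−y(i)| < ∞`. -/
def EtRel (t : ℕ → ℝ) (x y : ℕ → Bool) : Prop :=
  ∃ C : ℝ, ∀ i, t i * |(if x i then (1:ℝ) else 0) - (if y i then (1:ℝ) else 0)| < C

/-- `E₀` on `2^ω`: eventual agreement. -/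
def E0Rel (x y : ℕ → Bool) : Prop := ∃ m, ∀ n ≥ m, x n = y n

/-- `E₁` on `(2^ω)^ω`: eventual agreement of the component sequences. -/
def E1Rel (x y : ℕ → ℕ → Bool) : Prop := ∃ m, ∀ n ≥ m, x n = y n

lemma abs_term (a b : Bool) :
    |(if a then (1:ℝ) else 0) - (if b then (1:ℝ) else 0)| = if a = b then 0 else 1 := by
  cases a <;> cases b <;> norm_num

lemma et_iff (t : ℕ → ℝ) (ht : ∀ i, 0 ≤ t i) (x y : ℕ → Bool) :
    EtRel t x y ↔ ∃ C, 0 < C ∧ ∀ i, x i ≠ y i → t i < C := by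
  constructor
  · rintro ⟨C, hC⟩
    refine ⟨C, lt_of_le_of_lt (mul_nonneg (ht 0) (abs_nonneg _)) (hC 0), fun i hi => ?_⟩
    have := hC i
    rw [abs_term, if_neg hi, mul_one] at this
    exact this
  · rintro ⟨C, hC0, hC⟩
    refine ⟨C, fun i => ?_⟩
    rw [abs_term]
    by_cases h : x i = y i
    · rw [if_pos h, mul_zero]; exact hC0
    · rw [if_neg h, mul_one]; exact hC _ h

lemma infinite_gt (t : ℕ → ℝ) (hu : ∀ C : ℝ, ∃ i, C ≤ t i) (c : ℝ) :
    {i | c < t i}.Infinite := by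
  intro hfin
  obtain ⟨b, hb⟩ := (hfin.image t).bddAbove
  obtain ⟨i, hi⟩ := hu (max c b + 1)
  have : t i ≤ max c b := by
    by_cases h : c < t i
    · exact le_trans (hb (Set.mem_image_of_mem t h)) (le_max_right _ _)
    · exact le_trans (not_lt.1 h) (le_max_left _ _)
  linarith

lemma finite_to_bd {s : Set ℕ} (h : s.Finite) : ∃ m, ∀ n ≥ m, n ∉ s := by
  obtain ⟨m, hm⟩ := h.bddAbove
  exact ⟨m + 1, fun n hn hns => by have := hm hns; omega⟩

lemma Et_e0_case (t : ℕ → ℝ) (ht : ∀ i, 0 ≤ t i) (hu : ∀ C : ℝ, ∃ i, C ≤ t i)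
    (c0 : ℝ) (hc0 : ∀ C' : ℝ, ({i | c0 < t i ∧ t i ≤ C'} : Set ℕ).Finite) :
    ((∃ f : (ℕ → Bool) → (ℕ → Bool), Measurable f ∧
        ∀ x y, EtRel t x y ↔ E0Rel (f x) (f y)) ∧
     (∃ g : (ℕ → Bool) → (ℕ → Bool), Measurable g ∧
        ∀ x y, E0Rel x y ↔ EtRel t (g x) (g y))) := by
  classical
  set p : ℕ → Prop := fun i => c0 < t i with hp_def
  have hp : (setOf p).Infinite := infinite_gt t hu c0
  have hnth_mem : ∀ n, p (Nat.nth p n) := Nat.nth_mem_of_infinite hp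
  have hcount_nth : ∀ n, Nat.count p (Nat.nth p n) = n :=
    fun n => Nat.count_nth (fun hf => absurd hf hp)
  -- key characterization
  have key : ∀ x y : ℕ → Bool, EtRel t x y ↔ ({i | p i ∧ x i ≠ y i} : Set ℕ).Finite := by
    intro x y
    rw [et_iff t ht]
    constructor
    · rintro ⟨C, _, hC⟩
      exact (hc0 C).subset (fun i hi => ⟨hi.1, le_of_lt (hC i hi.2)⟩)
    · intro hfin
      obtain ⟨b, hb⟩ := (hfin.image t).bddAbove
      refine ⟨max (max b c0) 0 + 1, by positivity, fun i hi => ?_⟩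
      by_cases h : p i
      · have : t i ≤ b := hb (Set.mem_image_of_mem t ⟨h, hi⟩)
        have h2 : b ≤ max (max b c0) 0 := le_trans (le_max_left _ _) (le_max_left _ _)
        linarith
      · have : t i ≤ c0 := not_lt.1 h
        have h2 : c0 ≤ max (max b c0) 0 := le_trans (le_max_right _ _) (le_max_left _ _)
        linarith
  constructor
  · -- EtRel → E0
    refine ⟨fun x n => x (Nat.nth p n),
      measurable_pi_lambda _ (fun n => measurable_pi_apply _), fun x y => ?_⟩
    rw [key]
    constructor
    · intro hfin
      have hsub : {n | x (Nat.nth p n) ≠ y (Nat.nth p n)} ⊆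
          Nat.nth p ⁻¹' {i | p i ∧ x i ≠ y i} :=
        fun n hn => ⟨hnth_mem n, hn⟩
      have : ({n | x (Nat.nth p n) ≠ y (Nat.nth p n)} : Set ℕ).Finite :=
        (hfin.preimage ((Nat.nth_injective hp).injOn)).subset hsub
      obtain ⟨m, hm⟩ := finite_to_bd this
      exact ⟨m, fun n hn => not_ne_iff.1 (hm n hn)⟩
    · rintro ⟨m, hm⟩
      refine ((Set.finite_Iio m).image (Nat.nth p)).subset (fun i hi => ?_)
      have hni : Nat.nth p (Nat.count p i) = i := Nat.nth_count hi.1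
      refine ⟨Nat.count p i, ?_, hni⟩
      by_contra hlt
      exact hi.2 (by rw [← hni]; exact hm _ (not_lt.1 (fun h => hlt h)))
  · -- E0 → EtRel
    refine ⟨fun x i => if p i then x (Nat.count p i) else false,
      measurable_pi_lambda _ (fun i => ?_), fun x y => ?_⟩
    · by_cases h : p i
      · simp only [if_pos h]; exact measurable_pi_apply _
      · simp only [if_neg h]; exact measurable_const
    · constructor
      · rintro ⟨m, hm⟩
        rw [key]
        refine ((Set.finite_Iio m).image (Nat.nth p)).subset (fun i hi => ?_)
        have hpi : p i := hi.1
        have hd := hi.2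
        simp only [if_pos hpi] at hd
        refine ⟨Nat.count p i, ?_, Nat.nth_count hpi⟩
        by_contra hlt
        exact hd (hm _ (not_lt.1 hlt))
      · intro hEt
        rw [key] at hEt
        have hsub : {n | x n ≠ y n} ⊆ Nat.nth p ⁻¹'
            {i | p i ∧ (if p i then x (Nat.count p i) else false) ≠
              (if p i then y (Nat.count p i) else false)} := by
          intro n hn
          refine ⟨hnth_mem n, ?_⟩
          rw [if_pos (hnth_mem n), if_pos (hnth_mem n), hcount_nth n]
          exact hn
        have : ({n | x n ≠ y n} : Set ℕ).Finite :=
          (hEt.preimage ((Nat.nth_injective hp).injOn)).subset hsub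
        obtain ⟨m, hm⟩ := finite_to_bd this
        exact ⟨m, fun n hn => not_ne_iff.1 (hm n hn)⟩

lemma Et_e1_case (t : ℕ → ℝ) (ht : ∀ i, 0 ≤ t i) (hu : ∀ C : ℝ, ∃ i, C ≤ t i)
    (h2 : ∀ C : ℝ, ∃ C', ({i | C < t i ∧ t i ≤ C'} : Set ℕ).Infinite) :
    ((∃ f : (ℕ → Bool) → (ℕ → ℕ → Bool), Measurable f ∧
        ∀ x y, EtRel t x y ↔ E1Rel (f x) (f y)) ∧
     (∃ g : (ℕ → ℕ → Bool) → (ℕ → Bool), Measurable g ∧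
        ∀ x y, E1Rel x y ↔ EtRel t (g x) (g y))) := by
  classical
  -- the sequence of cut points
  set Cs : ℕ → ℝ := fun k => Nat.rec 0 (fun _ prev => max (h2 prev).choose (prev + 1)) k
    with hCs_def
  have hstep : ∀ k, Cs (k + 1) = max (h2 (Cs k)).choose (Cs k + 1) := fun k => rfl
  have hsucc : ∀ k, Cs k + 1 ≤ Cs (k + 1) := fun k => by rw [hstep]; exact le_max_right _ _
  have hmono : Monotone Cs := monotone_nat_of_le_succ (fun k => by linarith [hsucc k])
  have hnat : ∀ k : ℕ, (k : ℝ) ≤ Cs k := by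
    intro k
    induction k with
    | zero => simp [hCs_def]
    | succ n ih => push_cast; linarith [hsucc n]
  -- the bands
  set P : ℕ → ℕ → Prop := fun k i => Cs k < t i ∧ t i ≤ Cs (k + 1) with hP_def
  have hPinf : ∀ k, (setOf (P k)).Infinite := by
    intro k
    refine ((h2 (Cs k)).choose_spec).mono (fun i hi => ⟨hi.1, le_trans hi.2 ?_⟩)
    rw [hstep]; exact le_max_left _ _
  have hPuniq : ∀ k k' i, P k i → P k' i → k = k' := by
    intro k k' i hk hk'
    by_contra hne
    rcases Nat.lt_or_ge k k' with h | h
    · have : Cs (k + 1) ≤ Cs k' := hmono h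
      linarith [hk.2, hk'.1]
    · have hk'k : k' < k := lt_of_le_of_ne h (Ne.symm hne)
      have : Cs (k' + 1) ≤ Cs k := hmono hk'k
      linarith [hk'.2, hk.1]
  -- the tails
  set Q : ℕ → ℕ → Prop := fun n i => Cs n < t i with hQ_def
  have hQinf : ∀ n, (setOf (Q n)).Infinite := fun n => infinite_gt t hu (Cs n)
  constructor
  · -- EtRel → E1
    refine ⟨fun x n m => x (Nat.nth (Q n) m),
      measurable_pi_lambda _ (fun n => measurable_pi_lambda _
        (fun m => measurable_pi_apply _)), fun x y => ?_⟩
    rw [et_iff t ht]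
    constructor
    · rintro ⟨C, hC0, hC⟩
      refine ⟨⌈C⌉₊, fun k hk => funext (fun m => ?_)⟩
      by_contra hne
      have hQk : Q k (Nat.nth (Q k) m) := Nat.nth_mem_of_infinite (hQinf k) m
      have h1 : t (Nat.nth (Q k) m) < C := hC _ hne
      have h2' : C ≤ Cs k :=
        le_trans (Nat.le_ceil C) (le_trans (hnat ⌈C⌉₊) (by exact_mod_cast hmono hk))
      exact absurd hQk (by simp only [hQ_def]; linarith)
    · rintro ⟨m, hm⟩
      refine ⟨max (Cs m) 0 + 1, by positivity, fun i hi => ?_⟩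
      have hnQ : ¬ Q m i := by
        intro hQi
        have := congrFun (hm m le_rfl) (Nat.count (Q m) i)
        simp only [Nat.nth_count hQi] at this
        exact hi this
      have : t i ≤ Cs m := not_lt.1 hnQ
      have h3 : Cs m ≤ max (Cs m) 0 := le_max_left _ _
      linarith
  · -- E1 → EtRel
    refine ⟨fun x i => if h : ∃ k, P k i then x h.choose (Nat.count (P h.choose) i)
        else false,
      measurable_pi_lambda _ (fun i => ?_), fun x y => ?_⟩
    · by_cases h : ∃ k, P k i
      · simp only [dif_pos h]
        exact (measurable_pi_apply _).comp (measurable_pi_apply _)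
      · simp only [dif_neg h]; exact measurable_const
    · have gval : ∀ (x : ℕ → ℕ → Bool) (k i : ℕ) (hki : P k i),
          (if h : ∃ k, P k i then x h.choose (Nat.count (P h.choose) i) else false)
            = x k (Nat.count (P k) i) := by
        intro x k i hki
        have he : ∃ k, P k i := ⟨k, hki⟩
        rw [dif_pos he]
        have : he.choose = k := hPuniq _ _ _ he.choose_spec hki
        rw [this]
      constructor
      · rintro ⟨m, hm⟩
        rw [et_iff t ht]
        refine ⟨max (Cs m) 0 + 1, by positivity, fun i hi => ?_⟩
        by_cases he : ∃ k, P k i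
        · obtain ⟨k, hk⟩ := he
          simp only [gval x k i hk, gval y k i hk] at hi
          have hkm : k < m := by
            by_contra hge
            exact hi (congrFun (hm k (not_lt.1 hge)) _)
          have h1 : t i ≤ Cs (k + 1) := hk.2
          have h2' : Cs (k + 1) ≤ Cs m := hmono hkm
          have h3 : Cs m ≤ max (Cs m) 0 := le_max_left _ _
          linarith
        · exact absurd (by simp only [dif_neg he]) hi
      · intro hEt
        rw [et_iff t ht] at hEt
        obtain ⟨C, hC0, hC⟩ := hEt
        refine ⟨⌈C⌉₊, fun k hk => funext (fun j => ?_)⟩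
        by_contra hne
        set i := Nat.nth (P k) j with hi_def
        have hPk : P k i := Nat.nth_mem_of_infinite (hPinf k) j
        have hcnt : Nat.count (P k) i = j := Nat.count_nth (fun hf => absurd hf (hPinf k))
        have hgd : (if h : ∃ k', P k' i then x h.choose (Nat.count (P h.choose) i)
            else false) ≠ (if h : ∃ k', P k' i then y h.choose (Nat.count (P h.choose) i)
            else false) := by
          rw [gval x k i hPk, gval y k i hPk, hcnt]
          exact hne
        have h1 : t i < C := hC i hgd
        have h2' : C ≤ Cs k :=
          le_trans (Nat.le_ceil C) (le_trans (hnat ⌈C⌉₊) (by exact_mod_cast hmono hk))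
        exact absurd hPk.1 (by linarith)

/-- For every sequence `t⃗` of nonnegative reals, `E_t⃗` is either smooth, Borel
bireducible with `E₀`, or Borel bireducible with `E₁`. -/
theorem Et_trichotomy (t : ℕ → ℝ) (ht : ∀ i, 0 ≤ t i) :
    (∃ f : (ℕ → Bool) → (ℕ → Bool), Measurable f ∧
      ∀ x y, EtRel t x y ↔ f x = f y) ∨
    ((∃ f : (ℕ → Bool) → (ℕ → Bool), Measurable f ∧
        ∀ x y, EtRel t x y ↔ E0Rel (f x) (f y)) ∧
     (∃ g : (ℕ → Bool) → (ℕ → Bool), Measurable g ∧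
        ∀ x y, E0Rel x y ↔ EtRel t (g x) (g y))) ∨
    ((∃ f : (ℕ → Bool) → (ℕ → ℕ → Bool), Measurable f ∧
        ∀ x y, EtRel t x y ↔ E1Rel (f x) (f y)) ∧
     (∃ g : (ℕ → ℕ → Bool) → (ℕ → Bool), Measurable g ∧
        ∀ x y, E1Rel x y ↔ EtRel t (g x) (g y))) := by
  by_cases hbd : ∃ C : ℝ, ∀ i, t i < C
  · -- bounded: EtRel is total, hence smooth via a constant map
    obtain ⟨C, hC⟩ := hbd
    left
    refine ⟨fun _ _ => false, measurable_const, fun x y => ?_⟩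
    constructor
    · intro _; rfl
    · intro _
      refine ⟨C, fun i => lt_of_le_of_lt ?_ (hC i)⟩
      calc t i * |(if x i then (1:ℝ) else 0) - (if y i then (1:ℝ) else 0)|
          ≤ t i * 1 := by
            refine mul_le_mul_of_nonneg_left ?_ (ht i)
            rw [abs_term]; split_ifs <;> norm_num
        _ = t i := mul_one _
  · push_neg at hbd
    have hu : ∀ C : ℝ, ∃ i, C ≤ t i := hbd
    by_cases h2 : ∀ C : ℝ, ∃ C', ({i | C < t i ∧ t i ≤ C'} : Set ℕ).Infinite
    · exact Or.inr (Or.inr (Et_e1_case t ht hu h2))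
    · push_neg at h2
      obtain ⟨c0, hc0⟩ := h2
      refine Or.inr (Or.inl (Et_e0_case t ht hu c0 (fun C' => ?_)))
      exact hc0 C'
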